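/- Let (R, m) be an F-finite Noetherian local ring of prime characteristic p. If the Frobenius endomorphism F : R → R is pure, then F is split, i.e., there exists an R-linear map φ : F_* R → R with φ ∘ F = id_R. -/

import Mathlib

universe u v

open TensorProduct

/-- If `S` is a pure `R`-algebra, then any finite system of linear equations over `R`
that has a solution in `S` already has a solution in `R`. -/
theorem exists_solution_of_pure {R : Type u} [CommRing R] (S : Type u) [CommRing S] [Algebra R S]
    (hpure : ∀ (M : Type u) [AddCommGroup M] [Module R M],
      Function.Injective fun x : M => x ⊗ₜ[R] (1 : S))
    {m n : ℕ} (A : Fin m → Fin n → R) (b : Fin m → R)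
    (y : Fin n → S) (hy : ∀ i, ∑ j, A i j • y j = algebraMap R S (b i)) :
    ∃ x : Fin n → R, ∀ i, ∑ j, A i j * x j = b i := by
  classical
  set T : (Fin n → R) →ₗ[R] (Fin m → R) :=
    LinearMap.pi (fun i => Fintype.linearCombination R (A i)) with hT
  have hTapp : ∀ (x : Fin n → R) (i : Fin m), T x i = ∑ j, x j • A i j := by
    intro x i
    simp [hT, LinearMap.pi_apply, Fintype.linearCombination_apply]
  -- the key computation in `(Fin m → R) ⊗ S`
  have key : (b ⊗ₜ[R] (1 : S) : (Fin m → R) ⊗[R] S)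
      = ∑ j, (fun i => A i j) ⊗ₜ[R] y j := by
    calc b ⊗ₜ[R] (1 : S) = (∑ i, Pi.single i (b i)) ⊗ₜ[R] (1 : S) := by
          rw [Finset.univ_sum_single]
      _ = ∑ i, (Pi.single i (b i) : Fin m → R) ⊗ₜ[R] (1 : S) := by
          rw [TensorProduct.sum_tmul]
      _ = ∑ i, (Pi.single i (1 : R) : Fin m → R) ⊗ₜ[R] (algebraMap R S (b i)) := by
          refine Finset.sum_congr rfl fun i _ => ?_
          have : (Pi.single i (b i) : Fin m → R) = b i • (Pi.single i (1 : R) : Fin m → R) := by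
            rw [← Pi.single_smul, smul_eq_mul, mul_one]
          rw [this, TensorProduct.smul_tmul, Algebra.algebraMap_eq_smul_one]
      _ = ∑ i, (Pi.single i (1 : R) : Fin m → R) ⊗ₜ[R] (∑ j, A i j • y j) := by
          simp_rw [hy]
      _ = ∑ i, ∑ j, (Pi.single i (A i j) : Fin m → R) ⊗ₜ[R] y j := by
          refine Finset.sum_congr rfl fun i _ => ?_
          rw [TensorProduct.tmul_sum]
          refine Finset.sum_congr rfl fun j _ => ?_
          rw [← TensorProduct.smul_tmul, ← Pi.single_smul, smul_eq_mul, mul_one]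
      _ = ∑ j, ∑ i, (Pi.single i (A i j) : Fin m → R) ⊗ₜ[R] y j := Finset.sum_comm
      _ = ∑ j, (fun i => A i j) ⊗ₜ[R] y j := by
          refine Finset.sum_congr rfl fun j _ => ?_
          rw [← TensorProduct.sum_tmul, Finset.univ_sum_single]
  -- pass to the cokernel of `T`
  set Q := LinearMap.range T with hQ
  have hcol : ∀ j : Fin n, (fun i => A i j) ∈ Q := by
    intro j
    refine ⟨Pi.single j 1, ?_⟩
    funext i
    rw [hTapp]
    simp [Pi.single_apply]
  have hzero : (Q.mkQ b) ⊗ₜ[R] (1 : S) = (0 : ((Fin m → R) ⧸ Q) ⊗[R] S) := by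
    have := congrArg (LinearMap.rTensor S Q.mkQ) key
    rw [LinearMap.rTensor_tmul, map_sum] at this
    simp_rw [LinearMap.rTensor_tmul] at this
    rw [this]
    refine Finset.sum_eq_zero fun j _ => ?_
    rw [show Q.mkQ (fun i => A i j) = 0 from (Submodule.Quotient.mk_eq_zero Q).mpr (hcol j)]
    exact TensorProduct.zero_tmul _ _
  have hb : Q.mkQ b = 0 := by
    apply hpure ((Fin m → R) ⧸ Q)
    simpa using hzero
  have hbQ : b ∈ Q := (Submodule.Quotient.mk_eq_zero Q).mp hb
  obtain ⟨x, hx⟩ := hbQ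
  refine ⟨x, fun i => ?_⟩
  have := congrFun hx i
  rw [hTapp] at this
  rw [← this]
  exact Finset.sum_congr rfl fun j _ => (mul_comm _ _)

/-- Let `(R, m)` be an `F`-finite Noetherian local ring of prime characteristic `p`.  If the
Frobenius endomorphism `F : R → R` is pure, then `F` is split: there is an `R`-linear map
`φ : F_* R → R` with `φ ∘ F = id`.  Here `S` is a copy of `R` (via the ring isomorphism `e`)
equipped with the `R`-algebra structure given by Frobenius, so that `S = F_* R`;  `F`-finite
means `S` is module-finite over `R`, purity means `M → M ⊗_R S` is injective for every
`R`-module `M`, and the conclusion is an `R`-linear retraction of `algebraMap R S`. -/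
theorem frobenius_split_of_pure
    (R : Type u) [CommRing R] [IsNoetherianRing R] [IsLocalRing R]
    (p : ℕ) [Fact p.Prime] [CharP R p] [ExpChar R p]
    (S : Type u) [CommRing S] [Algebra R S] (e : S ≃+* R)
    (he : ∀ r : R, e (algebraMap R S r) = frobenius R p r)
    [Module.Finite R S]
    (hpure : ∀ (M : Type u) [AddCommGroup M] [Module R M],
      Function.Injective fun m : M => m ⊗ₜ[R] (1 : S)) :
    ∃ φ : S →ₗ[R] R, ∀ r : R, φ (algebraMap R S r) = r := by
  classical
  -- choose generators of `S` as an `R`-module, with the first one equal to `1`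
  obtain ⟨n, s, hs⟩ := Module.Finite.exists_fin (R := R) (M := S)
  set s' : Fin (n + 1) → S := Fin.cons 1 s with hs'
  set π : (Fin (n + 1) → R) →ₗ[R] S := Fintype.linearCombination R s' with hπdef
  have hπ : Function.Surjective π := by
    rw [← LinearMap.range_eq_top]
    rw [hπdef, Fintype.range_linearCombination]
    rw [eq_top_iff, ← hs]
    refine Submodule.span_mono ?_
    intro z hz
    obtain ⟨j, rfl⟩ := hz
    exact ⟨j.succ, by simp [hs']⟩
  -- the kernel of `π` is finitely generated
  have hker : (LinearMap.ker π).FG := IsNoetherian.noetherian _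
  obtain ⟨m, k, hk⟩ := Submodule.fg_iff_exists_fin_generating_family.mp hker
  have hkmem : ∀ i, k i ∈ LinearMap.ker π := fun i => by
    rw [← hk]; exact Submodule.subset_span ⟨i, rfl⟩
  -- set up the linear system
  set A : Fin (m + 1) → Fin (n + 1) → R := Fin.cons (Pi.single 0 1) k with hA
  set b : Fin (m + 1) → R := Pi.single 0 1 with hb
  have hy : ∀ i, ∑ j, A i j • s' j = algebraMap R S (b i) := by
    intro i
    refine Fin.cases ?_ (fun i' => ?_) i
    · have : ∑ j, A 0 j • s' j = π (Pi.single 0 1) := by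
        rw [hπdef, Fintype.linearCombination_apply]
        simp [hA]
      rw [this, hπdef, Fintype.linearCombination_apply_single]
      simp [hb, hs']
    · have h1 : ∑ j, A i'.succ j • s' j = π (k i') := by
        rw [hπdef, Fintype.linearCombination_apply]
        simp [hA]
      rw [h1, LinearMap.mem_ker.mp (hkmem i')]
      simp [hb, Fin.succ_ne_zero]
  obtain ⟨x, hx⟩ := exists_solution_of_pure S hpure A b s' hy
  -- `x` defines the splitting
  set φ₀ : (Fin (n + 1) → R) →ₗ[R] R := Fintype.linearCombination R x with hφ₀
  have hle : LinearMap.ker π ≤ LinearMap.ker φ₀ := by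
    rw [← hk, Submodule.span_le]
    rintro z ⟨i, rfl⟩
    have := hx i.succ
    simp only [hA, Fin.cons_succ] at this
    have hb0 : b i.succ = 0 := by simp [hb, Fin.succ_ne_zero]
    rw [hb0] at this
    simp only [SetLike.mem_coe, LinearMap.mem_ker, hφ₀, Fintype.linearCombination_apply]
    simpa using this
  set q := π.quotKerEquivOfSurjective hπ with hq
  refine ⟨((LinearMap.ker π).liftQ φ₀ hle) ∘ₗ q.symm.toLinearMap, fun r => ?_⟩
  have hπr : π (Pi.single 0 r) = algebraMap R S r := by
    rw [hπdef, Fintype.linearCombination_apply_single]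
    simp [hs', Algebra.algebraMap_eq_smul_one]
  have hqmk : q ((Submodule.Quotient.mk (Pi.single 0 r) : (Fin (n+1) → R) ⧸ LinearMap.ker π))
      = π (Pi.single 0 r) := rfl
  have hqsymm : q.symm (algebraMap R S r)
      = Submodule.Quotient.mk (Pi.single (0 : Fin (n+1)) r) := by
    apply q.injective
    rw [LinearEquiv.apply_symm_apply, hqmk, hπr]
  have hx0 : x 0 = 1 := by
    have h := hx 0
    simp only [hA, hb, Fin.cons_zero] at h
    simpa [Pi.single_apply] using h
  simp only [LinearMap.comp_apply, LinearEquiv.coe_toLinearMap, hqsymm]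
  rw [Submodule.liftQ_apply, hφ₀, Fintype.linearCombination_apply_single, smul_eq_mul, hx0,
    mul_one]
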